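/- Summary sufficiency (containment form): prove that the union of the four concatenation sets covers all target paths, i.e., Π(Vsrc, Vsink) ⊆ Π_SL(Vsrc, Vsink) ∪ Π_SL(Vsrc, Vap)·Π_IN(Vfp, Vsink) ∪ Π_OUT(Vsrc, Vfr)·Π_SL(Var, Vsink) ∪ Π_OUT(Vsrc, Vfr)·Π_SL(Var, Vap)·Π_IN(Vfp, Vsink), under the interprocedural graph model with stack-disciplined contexts, assuming every vertex of Vsrc and Vsink occurs only as endpoints and that every walk begins in Vsrc and ends in Vsink. -/

import Mathlib

/-- The set of (finite, nonempty) walks in the directed graph with edge relation `E`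
starting at a vertex of `V1` and ending at a vertex of `V2`. -/
def Walks {V : Type*} (E : V → V → Prop) (V1 V2 : Set V) : Set (List V) :=
  {l | l ≠ [] ∧ l.Chain' E ∧ (∃ a ∈ V1, l.head? = some a) ∧ ∃ b ∈ V2, l.getLast? = some b}

/-- Concatenation of two sets of walks: `A·B = { π1π2 : π1 ∈ A, π2 ∈ B,
(last π1, first π2) ∈ E }`. -/
def conc {V : Type*} (E : V → V → Prop) (A B : Set (List V)) : Set (List V) :=
  {l | ∃ p ∈ A, ∃ q ∈ B,
    (∃ a b, p.getLast? = some a ∧ q.head? = some b ∧ E a b) ∧ l = p ++ q}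

/-- Intra-procedural walks: all vertices share a single context. -/
def IPWalks {V C : Type*} (E : V → V → Prop) (ctx : V → C) (V1 V2 : Set V) :
    Set (List V) :=
  {l | l ∈ Walks E V1 V2 ∧ ∀ x ∈ l, ∀ y ∈ l, ctx x = ctx y}

/-- Same-level walks: the first and last vertices share the same context. -/
def SLWalks {V C : Type*} (E : V → V → Prop) (ctx : V → C) (V1 V2 : Set V) :
    Set (List V) :=
  {l | l ∈ Walks E V1 V2 ∧
    ∃ a b, l.head? = some a ∧ l.getLast? = some b ∧ ctx a = ctx b}

/-- Input walks under stack-disciplined contexts: the final context equals the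
initial one or is a proper extension of it (a callee context). -/
def INWalks {V F : Type*} (E : V → V → Prop) (ctx : V → List F)
    (V1 V2 : Set V) : Set (List V) :=
  {l | l ∈ Walks E V1 V2 ∧
    ∃ a b, l.head? = some a ∧ l.getLast? = some b ∧
      (ctx b = ctx a ∨ (ctx a <:+ ctx b ∧ ctx a ≠ ctx b))}

/-- Output walks under stack-disciplined contexts: the final context equals the
initial one or is a proper suffix of it (a caller context). -/
def OUTWalks {V F : Type*} (E : V → V → Prop) (ctx : V → List F)
    (V1 V2 : Set V) : Set (List V) :=
  {l | l ∈ Walks E V1 V2 ∧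
    ∃ a b, l.head? = some a ∧ l.getLast? = some b ∧
      (ctx b = ctx a ∨ (ctx b <:+ ctx a ∧ ctx b ≠ ctx a))}

private lemma step_loss {F : Type*} {s c c' : List F} (hs : s <:+ c) (hs' : ¬ s <:+ c')
    (hstep : (∃ f, c' = f :: c) ∨ (∃ f, c = f :: c') ∨ c = c') :
    c = s ∧ ∃ f, s = f :: c' := by
  rcases hstep with ⟨f, rfl⟩ | ⟨f, rfl⟩ | rfl
  · exact absurd (hs.trans (List.suffix_cons f c)) hs'
  · rcases List.suffix_cons_iff.mp hs with h | h
    · exact ⟨h.symm, f, h⟩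
    · exact absurd h hs'
  · exact absurd hs hs'

private lemma step_gain {F : Type*} {s c c' : List F} (hs : ¬ s <:+ c) (hs' : s <:+ c')
    (hstep : (∃ f, c' = f :: c) ∨ (∃ f, c = f :: c') ∨ c = c') :
    c' = s ∧ ∃ f, s = f :: c := by
  rcases hstep with ⟨f, rfl⟩ | ⟨f, rfl⟩ | rfl
  · rcases List.suffix_cons_iff.mp hs' with h | h
    · exact ⟨h.symm, f, h⟩
    · exact absurd h hs
  · exact absurd (hs'.trans (List.suffix_cons f c')) hs
  · exact absurd hs' hs

private lemma stack_decomp {F : Type*} (n : ℕ) (c : ℕ → List F)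
    (hstep : ∀ k, k < n →
      (∃ f, c (k+1) = f :: c k) ∨ (∃ f, c k = f :: c (k+1)) ∨ c k = c (k+1)) :
    c n = c 0 ∨
    (∃ j, j < n ∧ c j = c 0 ∧ (∃ f, c (j+1) = f :: c j) ∧ c (j+1) <:+ c n) ∨
    (∃ i, i + 1 ≤ n ∧ c (i+1) = c n ∧ (∃ f, c i = f :: c (i+1)) ∧ c i <:+ c 0) ∨
    (∃ i j, i + 1 ≤ j ∧ j < n ∧ c (i+1) = c j ∧
      (∃ f, c i = f :: c (i+1)) ∧ c i <:+ c 0 ∧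
      (∃ f, c (j+1) = f :: c j) ∧ c (j+1) <:+ c n) := by
  classical
  have fwd : ∀ (s : List F) (m a : ℕ), a + m ≤ n → s <:+ c a →
      (∀ k, a ≤ k → k < a + m → ¬(c k = s ∧ ∃ f, s = f :: c (k+1))) → s <:+ c (a + m) := by
    intro s m
    induction m with
    | zero => intro a _ h _; exact h
    | succ m ih =>
      intro a hle hs hcond
      have h1 : s <:+ c (a + m) := ih a (by omega) hs (fun k h1 h2 => hcond k h1 (by omega))
      by_contra hcon
      exact hcond (a+m) (by omega) (by omega) (step_loss h1 hcon (hstep (a+m) (by omega)))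
  have bwd : ∀ (s : List F) (m a : ℕ), a + m ≤ n → s <:+ c (a + m) →
      (∀ k, a ≤ k → k < a + m → ¬(c (k+1) = s ∧ ∃ f, s = f :: c k)) → s <:+ c a := by
    intro s m
    induction m with
    | zero => intro a _ h _; exact h
    | succ m ih =>
      intro a hle hs hcond
      have h1 : s <:+ c (a + m) := by
        by_contra hcon
        exact hcond (a+m) (by omega) (by omega) (step_gain hcon hs (hstep (a+m) (by omega)))
      exact ih a (by omega) h1 (fun k h1 h2 => hcond k h1 (by omega))
  by_cases h0 : c n = c 0
  · exact Or.inl h0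
  have hP0 : c 0 <:+ c 0 := List.suffix_rfl
  set j := Nat.findGreatest (fun k => c k <:+ c 0) n with hjdef
  have hjle : j ≤ n := Nat.findGreatest_le n
  have hPj : c j <:+ c 0 := by
    have h := Nat.findGreatest_spec (P := fun k => c k <:+ c 0) (Nat.zero_le n) hP0
    rw [← hjdef] at h
    exact h
  have hjmax : ∀ k, j < k → k ≤ n → ¬ c k <:+ c 0 := by
    intro k h1 h2 hk
    rw [hjdef] at h1
    exact Nat.findGreatest_is_greatest (P := fun k => c k <:+ c 0) h1 h2 hk
  have hQ : ∃ i, c i = c j := ⟨j, rfl⟩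
  set i := Nat.find hQ with hidef
  have hQi : c i = c j := Nat.find_spec hQ
  have hile : i ≤ j := Nat.find_min' hQ rfl
  have himin : ∀ k, k < i → c k ≠ c j := fun k hk => Nat.find_min hQ hk
  have hkey : c j ≠ c 0 → ∃ i', i' + 1 ≤ j ∧ c (i'+1) = c j ∧
      (∃ f, c i' = f :: c (i'+1)) ∧ c i' <:+ c 0 := by
    intro hne0
    have hi1 : 1 ≤ i := by
      rcases Nat.eq_zero_or_pos i with h | h
      · exact absurd (h ▸ hQi) fun hh => hne0 hh.symm
      · exact h
    have hii : i - 1 + 1 = i := by omega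
    have hsufj : c j <:+ c (i-1) := by
      have := fwd (c j) (i-1) 0 (by omega) hPj ?_
      · simpa using this
      · rintro k hk1 hk2 ⟨hck, -⟩
        exact himin k (by omega) hck
    have hstepi := hstep (i-1) (by omega)
    rw [hii] at hstepi
    rcases hstepi with ⟨f, hf⟩ | hpop | heq
    · rw [hQi] at hf
      have hlen := hsufj.length_le
      rw [hf] at hlen
      simp at hlen
    · obtain ⟨f, hf⟩ := hpop
      have hbw : c (i-1) <:+ c 0 := by
        have := bwd (c (i-1)) (i-1) 0 (by omega) (by rw [Nat.zero_add]) ?_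
        · simpa using this
        · rintro k hk1 hk2 ⟨hc1, g, hg⟩
          have h2 := hf.symm.trans hg
          injection h2 with _ h3
          exact himin k (by omega) (h3.symm.trans hQi)
      refine ⟨i - 1, by omega, ?_, ?_, hbw⟩
      · rw [hii]; exact hQi
      · rw [hii]; exact ⟨f, hf⟩
    · exact absurd (heq.trans hQi) (himin (i-1) (by omega))
  by_cases hjn : j = n
  · have hne0 : c j ≠ c 0 := by rw [hjn]; exact h0
    obtain ⟨i', h1, h2, h3, h4⟩ := hkey hne0
    exact Or.inr (Or.inr (Or.inl ⟨i', by omega, by rw [← hjn]; exact h2, h3, h4⟩))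
  · have hjn' : j < n := lt_of_le_of_ne hjle hjn
    have hpush : ∃ f, c (j+1) = f :: c j := by
      rcases hstep j hjn' with h | ⟨f, hf⟩ | heq
      · exact h
      · exact absurd (((List.suffix_cons f _).trans (hf ▸ List.suffix_rfl)).trans hPj)
          (hjmax (j+1) (by omega) (by omega))
      · exact absurd (heq ▸ hPj) (hjmax (j+1) (by omega) (by omega))
    have hin : c (j+1) <:+ c n := by
      obtain ⟨f, hf⟩ := hpush
      have := fwd (c (j+1)) (n - (j+1)) (j+1) (by omega) List.suffix_rfl ?_
      · rwa [show j + 1 + (n - (j+1)) = n from by omega] at this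
      · rintro k hk1 hk2 ⟨hck, g, hg⟩
        have h2 := hf.symm.trans hg
        injection h2 with _ h3
        exact hjmax (k+1) (by omega) (by omega) (h3 ▸ hPj)
    by_cases hj0 : c j = c 0
    · exact Or.inr (Or.inl ⟨j, hjn', hj0, hpush, hin⟩)
    · obtain ⟨i', h1, h2, h3, h4⟩ := hkey hj0
      exact Or.inr (Or.inr (Or.inr ⟨i', j, h1, hjn', h2, h3, h4, hpush, hin⟩))

private lemma seg_facts {V : Type*} (l : List V) (a b : ℕ) (hab : a ≤ b) (hb : b < l.length) :
    (l.take (b+1)).drop a ≠ [] ∧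
    ((l.take (b+1)).drop a).head? = some (l[a]'(lt_of_le_of_lt hab hb)) ∧
    ((l.take (b+1)).drop a).getLast? = some (l[b]'hb) := by
  have hlen : ((l.take (b+1)).drop a).length = b + 1 - a := by
    simp only [List.length_drop, List.length_take]
    omega
  refine ⟨?_, ?_, ?_⟩
  · intro h
    rw [h] at hlen
    simp at hlen
    omega
  · rw [List.head?_drop, List.getElem?_take_of_lt (by omega),
      List.getElem?_eq_getElem (lt_of_le_of_lt hab hb)]
  · rw [List.getLast?_eq_getElem? , hlen, List.getElem?_drop,
      show a + (b + 1 - a - 1) = b from by omega,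
      List.getElem?_take_of_lt (by omega), List.getElem?_eq_getElem hb]

/-- Summary sufficiency (containment form, Theorem 1 / Lemma 4 ⊆ direction):
every source-to-sink walk whose interior vertices avoid `Vsrc ∪ Vsink` lies in
the union of the four concatenation sets. -/
theorem summary_sufficiency {V F : Type*} (E : V → V → Prop) (ctx : V → List F)
    (Vsrc Vsink Vfp Vap Vfr Var : Set V)
    (hcall : ∀ u v, E u v → u ∈ Vap → v ∈ Vfp → ∃ f, ctx v = f :: ctx u)
    (hret : ∀ u v, E u v → u ∈ Vfr → v ∈ Var → ∃ f, ctx u = f :: ctx v)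
    (hcall_only : ∀ u v, E u v → (∃ f, ctx v = f :: ctx u) → u ∈ Vap ∧ v ∈ Vfp)
    (hret_only : ∀ u v, E u v → (∃ f, ctx u = f :: ctx v) → u ∈ Vfr ∧ v ∈ Var)
    (hintra : ∀ u v, E u v → ¬ (u ∈ Vap ∧ v ∈ Vfp) → ¬ (u ∈ Vfr ∧ v ∈ Var) →
      ctx u = ctx v) :
    ∀ l ∈ Walks E Vsrc Vsink,
      (∀ x ∈ l.tail.dropLast, x ∉ Vsrc ∪ Vsink) →
      l ∈ SLWalks E ctx Vsrc Vsink ∪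
        conc E (SLWalks E ctx Vsrc Vap) (INWalks E ctx Vfp Vsink) ∪
        conc E (OUTWalks E ctx Vsrc Vfr) (SLWalks E ctx Var Vsink) ∪
        conc E (conc E (OUTWalks E ctx Vsrc Vfr) (SLWalks E ctx Var Vap))
          (INWalks E ctx Vfp Vsink) := by
  intro l hl _hint
  obtain ⟨hne, hch, ⟨a, ha, hheada⟩, ⟨b, hbk, hlastb⟩⟩ := hl
  have hn : 0 < l.length := List.length_pos_iff.mpr hne
  set N := l.length - 1 with hN
  have hNlt : N < l.length := by omega
  set c : ℕ → List F := fun k => ctx (l.getD k (l.head hne)) with hc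
  have hck : ∀ (k : ℕ) (h : k < l.length), c k = ctx (l[k]'h) := by
    intro k h
    rw [hc]
    exact congrArg ctx (List.getD_eq_getElem l _ h)
  have ha0 : l[0]'hn = a := by
    have h2 : l.head? = l[0]? := List.head?_eq_getElem?
    rw [hheada, List.getElem?_eq_getElem hn] at h2
    exact (Option.some_inj.mp h2).symm
  have hbN : l[N]'hNlt = b := by
    have h2 : l.getLast? = l[l.length - 1]? := List.getLast?_eq_getElem?
    rw [hlastb, ← hN, List.getElem?_eq_getElem hNlt] at h2
    exact (Option.some_inj.mp h2).symm
  have hE : ∀ (k : ℕ) (h : k + 1 < l.length),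
      E (l[k]'(Nat.lt_of_succ_lt h)) (l[k+1]'h) := by
    intro k h
    have h2 := List.isChain_iff_getElem.mp hch k (by omega)
    simpa [List.get_eq_getElem] using h2
  have hclass : ∀ k, k < N →
      (∃ f, c (k+1) = f :: c k) ∨ (∃ f, c k = f :: c (k+1)) ∨ c k = c (k+1) := by
    intro k hk
    have h1 : k + 1 < l.length := by omega
    have h0 : k < l.length := by omega
    rw [hck k h0, hck (k+1) h1]
    by_cases hc1 : l[k]'h0 ∈ Vap ∧ l[k+1]'h1 ∈ Vfp
    · exact Or.inl (hcall _ _ (hE k h1) hc1.1 hc1.2)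
    · by_cases hr1 : l[k]'h0 ∈ Vfr ∧ l[k+1]'h1 ∈ Var
      · exact Or.inr (Or.inl (hret _ _ (hE k h1) hr1.1 hr1.2))
      · exact Or.inr (Or.inr (hintra _ _ (hE k h1) hc1 hr1))
  rcases stack_decomp N c hclass with h0
    | ⟨j, hjn, hj0, ⟨f, hfj⟩, hin⟩
    | ⟨i, hiN, hiq, ⟨f, hfi⟩, hout⟩
    | ⟨i, j, hij, hjn, hiq, ⟨f, hfi⟩, hout, ⟨g, hfj⟩, hin⟩
  · -- same-level walk
    refine Or.inl (Or.inl (Or.inl ⟨⟨hne, hch, ⟨a, ha, hheada⟩, ⟨b, hbk, hlastb⟩⟩,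
      a, b, hheada, hlastb, ?_⟩))
    rw [hck 0 hn, hck N hNlt, ha0, hbN] at h0
    exact h0.symm
  · -- SL · IN
    have hj1 : j + 1 < l.length := by omega
    have hjlt : j < l.length := by omega
    obtain ⟨hp_ne, hp_hd, hp_lt⟩ := seg_facts l 0 j (Nat.zero_le _) hjlt
    obtain ⟨hq_ne, hq_hd, hq_lt⟩ := seg_facts l (j+1) N (by omega) hNlt
    have hpair := hcall_only _ _ (hE j hj1)
      ⟨f, by rw [← hck j hjlt, ← hck (j+1) hj1]; exact hfj⟩
    have hsplit : l = (l.take (j+1)).drop 0 ++ (l.take (N+1)).drop (j+1) := by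
      rw [show N + 1 = l.length from by omega, List.drop_zero, List.take_length,
        List.take_append_drop]
    refine Or.inl (Or.inl (Or.inr ⟨(l.take (j+1)).drop 0, ?_, (l.take (N+1)).drop (j+1), ?_,
      ⟨l[j]'hjlt, l[j+1]'hj1, hp_lt, hq_hd, hE j hj1⟩, hsplit⟩))
    · refine ⟨⟨hp_ne, (hch.take _).drop _, ⟨a, ha, by rw [hp_hd, ha0]⟩,
        ⟨l[j]'hjlt, hpair.1, hp_lt⟩⟩, l[0]'hn, l[j]'hjlt, hp_hd, hp_lt, ?_⟩
      rw [← hck 0 hn, ← hck j hjlt]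
      exact hj0.symm
    · refine ⟨⟨hq_ne, (hch.take _).drop _, ⟨l[j+1]'hj1, hpair.2, hq_hd⟩,
        ⟨b, hbk, by rw [hq_lt, hbN]⟩⟩, l[j+1]'hj1, l[N]'hNlt, hq_hd, hq_lt, ?_⟩
      rw [← hck (j+1) hj1, ← hck N hNlt]
      rcases eq_or_ne (c N) (c (j+1)) with h | h
      · exact Or.inl h
      · exact Or.inr ⟨hin, fun hh => h hh.symm⟩
  · -- OUT · SL
    have hi1 : i + 1 < l.length := by omega
    have hilt : i < l.length := by omega
    obtain ⟨hp_ne, hp_hd, hp_lt⟩ := seg_facts l 0 i (Nat.zero_le _) hilt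
    obtain ⟨hq_ne, hq_hd, hq_lt⟩ := seg_facts l (i+1) N (by omega) hNlt
    have hpair := hret_only _ _ (hE i hi1)
      ⟨f, by rw [← hck i hilt, ← hck (i+1) hi1]; exact hfi⟩
    have hsplit : l = (l.take (i+1)).drop 0 ++ (l.take (N+1)).drop (i+1) := by
      rw [show N + 1 = l.length from by omega, List.drop_zero, List.take_length,
        List.take_append_drop]
    refine Or.inl (Or.inr ⟨(l.take (i+1)).drop 0, ?_, (l.take (N+1)).drop (i+1), ?_,
      ⟨l[i]'hilt, l[i+1]'hi1, hp_lt, hq_hd, hE i hi1⟩, hsplit⟩)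
    · refine ⟨⟨hp_ne, (hch.take _).drop _, ⟨a, ha, by rw [hp_hd, ha0]⟩,
        ⟨l[i]'hilt, hpair.1, hp_lt⟩⟩, l[0]'hn, l[i]'hilt, hp_hd, hp_lt, ?_⟩
      rw [← hck 0 hn, ← hck i hilt]
      rcases eq_or_ne (c i) (c 0) with h | h
      · exact Or.inl h
      · exact Or.inr ⟨hout, h⟩
    · refine ⟨⟨hq_ne, (hch.take _).drop _, ⟨l[i+1]'hi1, hpair.2, hq_hd⟩,
        ⟨b, hbk, by rw [hq_lt, hbN]⟩⟩, l[i+1]'hi1, l[N]'hNlt, hq_hd, hq_lt, ?_⟩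
      rw [← hck (i+1) hi1, ← hck N hNlt]
      exact hiq
  · -- OUT · SL · IN
    have hi1 : i + 1 < l.length := by omega
    have hilt : i < l.length := by omega
    have hj1 : j + 1 < l.length := by omega
    have hjlt : j < l.length := by omega
    obtain ⟨hp_ne, hp_hd, hp_lt⟩ := seg_facts l 0 i (Nat.zero_le _) hilt
    obtain ⟨hm_ne, hm_hd, hm_lt⟩ := seg_facts l (i+1) j (by omega) hjlt
    obtain ⟨hq_ne, hq_hd, hq_lt⟩ := seg_facts l (j+1) N (by omega) hNlt
    have hrpair := hret_only _ _ (hE i hi1)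
      ⟨f, by rw [← hck i hilt, ← hck (i+1) hi1]; exact hfi⟩
    have hcpair := hcall_only _ _ (hE j hj1)
      ⟨g, by rw [← hck j hjlt, ← hck (j+1) hj1]; exact hfj⟩
    have hsplit : l = (l.take (i+1)).drop 0 ++ (l.take (j+1)).drop (i+1)
        ++ (l.take (N+1)).drop (j+1) := by
      rw [show N + 1 = l.length from by omega, List.drop_zero, List.take_length,
        show l.take (i+1) = (l.take (j+1)).take (i+1) from by
          rw [List.take_take, Nat.min_eq_left (by omega)],
        List.take_append_drop, List.take_append_drop]
    refine Or.inr ⟨(l.take (i+1)).drop 0 ++ (l.take (j+1)).drop (i+1),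
      ⟨(l.take (i+1)).drop 0, ?_, (l.take (j+1)).drop (i+1), ?_,
        ⟨l[i]'hilt, l[i+1]'hi1, hp_lt, hm_hd, hE i hi1⟩, rfl⟩,
      (l.take (N+1)).drop (j+1), ?_,
      ⟨l[j]'hjlt, l[j+1]'hj1, ?_, hq_hd, hE j hj1⟩, hsplit⟩
    · refine ⟨⟨hp_ne, (hch.take _).drop _, ⟨a, ha, by rw [hp_hd, ha0]⟩,
        ⟨l[i]'hilt, hrpair.1, hp_lt⟩⟩, l[0]'hn, l[i]'hilt, hp_hd, hp_lt, ?_⟩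
      rw [← hck 0 hn, ← hck i hilt]
      rcases eq_or_ne (c i) (c 0) with h | h
      · exact Or.inl h
      · exact Or.inr ⟨hout, h⟩
    · refine ⟨⟨hm_ne, (hch.take _).drop _, ⟨l[i+1]'hi1, hrpair.2, hm_hd⟩,
        ⟨l[j]'hjlt, hcpair.1, hm_lt⟩⟩, l[i+1]'hi1, l[j]'hjlt, hm_hd, hm_lt, ?_⟩
      rw [← hck (i+1) hi1, ← hck j hjlt]
      exact hiq
    · refine ⟨⟨hq_ne, (hch.take _).drop _, ⟨l[j+1]'hj1, hcpair.2, hq_hd⟩,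
        ⟨b, hbk, by rw [hq_lt, hbN]⟩⟩, l[j+1]'hj1, l[N]'hNlt, hq_hd, hq_lt, ?_⟩
      rw [← hck (j+1) hj1, ← hck N hNlt]
      rcases eq_or_ne (c N) (c (j+1)) with h | h
      · exact Or.inl h
      · exact Or.inr ⟨hin, fun hh => h hh.symm⟩
    · rw [List.getLast?_append, hm_lt]
      rfl
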